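/- Let X be a countably infinite set equipped with the cofinite topology (closed sets: finite sets and X). Then: (1) the nonempty compact saturated subsets of X are exactly the nonempty subsets of X, i.e. K(X) = 2^X \ {∅}; (2) the Scott topology of the Smyth order on K(X) coincides with the upper Vietoris topology; (3) K(X) with the Smyth order is not a dcpo, and consequently X is not well-filtered. -/

import Mathlib

open Set Topology TopologicalSpace

universe u v

/-- A subset of a topological space is *saturated* if it equals the intersection of the
open sets containing it. -/
def IsSat {X : Type u} [TopologicalSpace X] (A : Set X) : Prop :=
  A = ⋂₀ {U : Set X | IsOpen U ∧ A ⊆ U}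

/-- The saturation `↑a` of a point `a` : the intersection of all open sets containing `a`. -/
def satPt {X : Type u} [TopologicalSpace X] (a : X) : Set X :=
  ⋂₀ {U : Set X | IsOpen U ∧ a ∈ U}

/-- `KS X` is the collection of all nonempty compact saturated subsets of `X`. -/
def KS (X : Type u) [TopologicalSpace X] : Type u :=
  {K : Set X // K.Nonempty ∧ IsCompact K ∧ IsSat K}

/-- The *Smyth order* on `KS X` : `K ≤ L` iff `L ⊆ K` (reverse inclusion). -/
instance KS.instPartialOrder {X : Type u} [TopologicalSpace X] : PartialOrder (KS X) where
  le K L := L.1 ⊆ K.1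
  le_refl K := subset_rfl
  le_trans K L M h₁ h₂ := by intro x hx; exact h₁ (h₂ hx)
  le_antisymm K L h₁ h₂ := by exact Subtype.ext (subset_antisymm h₂ h₁)

/-- The *upper Vietoris topology* on `KS X`, generated by the sets `□U = {K | K ⊆ U}`
for `U` open in `X`.  The resulting space is the Smyth power space `P_S(X)`. -/
def upperVietoris (X : Type u) [TopologicalSpace X] : TopologicalSpace (KS X) :=
  TopologicalSpace.generateFrom
    {S : Set (KS X) | ∃ U : Set X, IsOpen U ∧ S = {K : KS X | K.1 ⊆ U}}

/-- Scott-open subsets of a preorder: upper sets inaccessible by suprema of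
(nonempty) directed sets. -/
def ScottOpen {P : Type u} [Preorder P] (U : Set P) : Prop :=
  IsUpperSet U ∧ ∀ d : Set P, d.Nonempty → DirectedOn (· ≤ ·) d →
    ∀ a : P, IsLUB d a → a ∈ U → (d ∩ U).Nonempty

/-- The Scott topology of a preorder. -/
def scottTop (P : Type u) [Preorder P] : TopologicalSpace P where
  IsOpen := ScottOpen
  isOpen_univ := ⟨isUpperSet_univ, fun d hd _ _ _ _ => by simpa using hd⟩
  isOpen_inter := by
    rintro U V ⟨hUu, hUd⟩ ⟨hVu, hVd⟩
    refine ⟨hUu.inter hVu, fun d hd hdir a ha haUV => ?_⟩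
    obtain ⟨x, hxd, hxU⟩ := hUd d hd hdir a ha haUV.1
    obtain ⟨y, hyd, hyV⟩ := hVd d hd hdir a ha haUV.2
    obtain ⟨z, hzd, hxz, hyz⟩ := hdir x hxd y hyd
    exact ⟨z, hzd, hUu hxz hxU, hVu hyz hyV⟩
  isOpen_sUnion := by
    intro S hS
    refine ⟨isUpperSet_sUnion fun s hs => (hS s hs).1, fun d hd hdir a ha haU => ?_⟩
    obtain ⟨t, htS, hat⟩ := haU
    obtain ⟨x, hxd, hxt⟩ := (hS t htS).2 d hd hdir a ha hat
    exact ⟨x, hxd, t, htS, hxt⟩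

/-- A topological space is *well-filtered* if for every nonempty family of nonempty compact
saturated sets which is filtered under reverse inclusion and every open `U` containing the
intersection of the family, some member of the family is contained in `U`. -/
def WellFiltered (X : Type u) [TopologicalSpace X] : Prop :=
  ∀ 𝒦 : Set (Set X), 𝒦.Nonempty →
    (∀ K ∈ 𝒦, K.Nonempty ∧ IsCompact K ∧ IsSat K) →
    (∀ K₁ ∈ 𝒦, ∀ K₂ ∈ 𝒦, ∃ K₃ ∈ 𝒦, K₃ ⊆ K₁ ∧ K₃ ⊆ K₂) →
    ∀ U : Set X, IsOpen U → ⋂₀ 𝒦 ⊆ U → ∃ K ∈ 𝒦, K ⊆ U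

/-- The specialization order of a topological space: `x ≤ y` iff `x ∈ cl {y}`. -/
def specLE {X : Type u} [TopologicalSpace X] (x y : X) : Prop := x ∈ closure {y}

/-- Least upper bound with respect to an explicit relation. -/
def RelLUB {P : Type u} (r : P → P → Prop) (d : Set P) (a : P) : Prop :=
  (∀ x ∈ d, r x a) ∧ ∀ b : P, (∀ x ∈ d, r x b) → r a b

/-- Scott openness with respect to an explicit relation. -/
def RelScottOpen {P : Type u} (r : P → P → Prop) (U : Set P) : Prop :=
  (∀ ⦃x y : P⦄, x ∈ U → r x y → y ∈ U) ∧
  ∀ d : Set P, d.Nonempty → DirectedOn r d → ∀ a : P, RelLUB r d a → a ∈ U → (d ∩ U).Nonempty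

/-- A `d`-space (monotone convergence space): the specialization order is directed complete
and every open set is Scott open with respect to the specialization order. -/
def DSpace (X : Type u) [TopologicalSpace X] : Prop :=
  (∀ d : Set X, d.Nonempty → DirectedOn specLE d → ∃ a : X, RelLUB specLE d a) ∧
  ∀ U : Set X, IsOpen U → RelScottOpen specLE U

/-- A space is *sober* if every irreducible closed set is the closure of a unique point. -/
def SoberSp (Z : Type u) [TopologicalSpace Z] : Prop :=
  ∀ A : Set Z, IsClosed A → IsIrreducible A → ∃! z : Z, A = closure {z}

/-- A closed set `A` is a *Rudin set* if there is a (nonempty) family of nonempty compact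
saturated sets, filtered under reverse inclusion, such that `A` is a minimal closed set
meeting every member of the family. -/
def RudinSet {X : Type u} [TopologicalSpace X] (A : Set X) : Prop :=
  IsClosed A ∧
  ∃ 𝒦 : Set (Set X), 𝒦.Nonempty ∧
    (∀ K ∈ 𝒦, K.Nonempty ∧ IsCompact K ∧ IsSat K) ∧
    (∀ K₁ ∈ 𝒦, ∀ K₂ ∈ 𝒦, ∃ K₃ ∈ 𝒦, K₃ ⊆ K₁ ∧ K₃ ⊆ K₂) ∧
    (∀ K ∈ 𝒦, (A ∩ K).Nonempty) ∧
    (∀ B : Set X, IsClosed B → (∀ K ∈ 𝒦, (B ∩ K).Nonempty) → B ⊆ A → B = A)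

/-- A *Rudin space*: every irreducible closed subset is a Rudin set. -/
def RudinSpace (X : Type u) [TopologicalSpace X] : Prop :=
  ∀ A : Set X, IsClosed A → IsIrreducible A → RudinSet A

/-- A closed set `A` is *well-filtered determined* (WD) if every continuous map into a
well-filtered T₀ space sends it to a set whose closure is a point closure. -/
def WDSet {X : Type u} [TopologicalSpace X] (A : Set X) : Prop :=
  ∀ (Y : Type v) [TopologicalSpace Y] [T0Space Y], WellFiltered Y →
    ∀ f : X → Y, Continuous f → ∃ y : Y, closure (f '' A) = closure {y}

/-- A *well-filtered determined (WD) space*: every irreducible closed subset is WD. -/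
def WDSpace (X : Type u) [TopologicalSpace X] : Prop :=
  ∀ A : Set X, IsClosed A → IsIrreducible A → WDSet.{u, v} A

/-- Property S: for every irreducible closed set `A`, the family `{↑a : a ∈ A}` is an
irreducible subset of the Scott power space `Σ K(X)`, or
`◇A = {K ∈ K(X) : K ∩ A ≠ ∅}` is an irreducible closed subset of `Σ K(X)`. -/
def PropertyS (X : Type u) [TopologicalSpace X] : Prop :=
  ∀ A : Set X, IsClosed A → IsIrreducible A →
    @IsIrreducible (KS X) (scottTop (KS X)) {K : KS X | ∃ a ∈ A, K.1 = satPt a} ∨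
    (@IsClosed (KS X) (scottTop (KS X)) {K : KS X | (K.1 ∩ A).Nonempty} ∧
      @IsIrreducible (KS X) (scottTop (KS X)) {K : KS X | (K.1 ∩ A).Nonempty})

/-- The order of Jia's dcpo on `ℕ × ℕ × (ℕ ∪ {∞})`:
`(i₁,j₁,k₁) ≤ (i₂,j₂,k₂)` iff (`i₁ = i₂`, `j₁ = j₂` and `k₁ ≤ k₂`) or
(`i₂ = i₁ + 1`, `k₁ ≤ j₂` and `k₂ = ∞`). -/
def LJiaLE (a b : ℕ × ℕ × WithTop ℕ) : Prop :=
  (a.1 = b.1 ∧ a.2.1 = b.2.1 ∧ a.2.2 ≤ b.2.2) ∨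
  (b.1 = a.1 + 1 ∧ a.2.2 ≤ (b.2.1 : WithTop ℕ) ∧ b.2.2 = ⊤)

section Aux

variable {X : Type} [TopologicalSpace X]

lemma KS.le_iff {K L : KS X} : K ≤ L ↔ L.1 ⊆ K.1 := Iff.rfl

lemma cof_compl_singleton_open (hcof : ∀ U : Set X, IsOpen U ↔ U = ∅ ∨ Uᶜ.Finite) (x : X) :
    IsOpen ({x}ᶜ : Set X) := by
  rw [hcof]; right; rw [compl_compl]; exact Set.finite_singleton x

lemma cof_compact (hcof : ∀ U : Set X, IsOpen U ↔ U = ∅ ∨ Uᶜ.Finite) (K : Set X) :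
    IsCompact K := by
  classical
  rcases K.eq_empty_or_nonempty with rfl | ⟨x, hx⟩
  · exact isCompact_empty
  · refine isCompact_of_finite_subcover fun {ι} U hUo hKU => ?_
    obtain ⟨i₀, hxi₀⟩ := Set.mem_iUnion.mp (hKU hx)
    have hfin : (U i₀)ᶜ.Finite := by
      rcases (hcof (U i₀)).mp (hUo i₀) with h | h
      · simp [h] at hxi₀
      · exact h
    have hfin2 : (K \ U i₀).Finite := hfin.subset fun y hy => hy.2
    have hch : ∀ y : X, ∃ i : ι, y ∈ K \ U i₀ → y ∈ U i := by
      intro y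
      by_cases hy : y ∈ K \ U i₀
      · obtain ⟨i, hi⟩ := Set.mem_iUnion.mp (hKU hy.1)
        exact ⟨i, fun _ => hi⟩
      · exact ⟨i₀, fun h => absurd h hy⟩
    choose g hg using hch
    refine ⟨insert i₀ (hfin2.toFinset.image g), fun z hz => ?_⟩
    by_cases hz0 : z ∈ U i₀
    · exact Set.mem_iUnion₂.mpr ⟨i₀, Finset.mem_insert_self _ _, hz0⟩
    · have hzd : z ∈ K \ U i₀ := ⟨hz, hz0⟩
      refine Set.mem_iUnion₂.mpr ⟨g z, ?_, hg z hzd⟩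
      exact Finset.mem_insert_of_mem (Finset.mem_image_of_mem g (hfin2.mem_toFinset.mpr hzd))

lemma cof_sat (hcof : ∀ U : Set X, IsOpen U ↔ U = ∅ ∨ Uᶜ.Finite) (A : Set X) : IsSat A := by
  apply subset_antisymm
  · intro x hx U hU
    exact hU.2 hx
  · intro x hx
    by_contra hxA
    exact (hx ({x}ᶜ) ⟨cof_compl_singleton_open hcof x, fun a ha hax => hxA (by
      simp only [Set.mem_singleton_iff] at hax; exact hax ▸ ha)⟩) rfl

lemma cof_open_nonempty [Infinite X]
    {U : Set X} (hU : Uᶜ.Finite) : U.Nonempty := by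
  by_contra h
  rw [Set.not_nonempty_iff_eq_empty] at h
  subst h
  simp only [Set.compl_empty] at hU
  exact Set.infinite_univ hU

/-- common lower bound in a directed family avoiding a finite set -/
lemma directed_avoid {d : Set (KS X)} (hne : d.Nonempty) (hdir : DirectedOn (· ≤ ·) d)
    {F : Set X} (hF : F.Finite) (h : ∀ x ∈ F, ∃ L ∈ d, x ∉ L.1) :
    ∃ z ∈ d, ∀ x ∈ F, x ∉ z.1 := by
  revert h
  refine Set.Finite.induction_on F hF ?_ ?_
  · intro _; exact ⟨hne.choose, hne.choose_spec, by simp⟩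
  intro a s ha hs ih h
  obtain ⟨z₁, hz₁d, hz₁⟩ := ih fun x hx => h x (Set.mem_insert_of_mem a hx)
  obtain ⟨L, hLd, hL⟩ := h a (Set.mem_insert a s)
  obtain ⟨z, hzd, hz₁z, hLz⟩ := hdir z₁ hz₁d L hLd
  refine ⟨z, hzd, fun x hx hxz => ?_⟩
  rcases hx with rfl | hx
  · exact hL (hLz hxz)
  · exact hz₁ x hx (hz₁z hxz)

end Aux

/-- Let `X` be a countably infinite set with the cofinite topology.  Then:
(1) the nonempty compact saturated subsets of `X` are exactly the nonempty subsets;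
(2) the Scott topology of the Smyth order on `K(X)` coincides with the upper Vietoris topology;
(3) `K(X)` with the Smyth order is not a dcpo, and `X` is not well-filtered. -/
theorem stmt8 (X : Type) [Countable X] [Infinite X] [TopologicalSpace X]
    (hcof : ∀ U : Set X, IsOpen U ↔ U = ∅ ∨ Uᶜ.Finite) :
    (∀ K : Set X, (K.Nonempty ∧ IsCompact K ∧ IsSat K) ↔ K.Nonempty) ∧
    (scottTop (KS X) = upperVietoris X) ∧
    (¬ ∀ d : Set (KS X), d.Nonempty → DirectedOn (· ≤ ·) d → ∃ a : KS X, IsLUB d a) ∧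
    ¬ WellFiltered X := by
  have hKS : ∀ K : Set X, (K.Nonempty ∧ IsCompact K ∧ IsSat K) ↔ K.Nonempty := by
    intro K
    exact ⟨fun h => h.1, fun h => ⟨h, cof_compact hcof K, cof_sat hcof K⟩⟩
  -- the injection from ℕ
  set f := Infinite.natEmbedding X with hf
  have hKn : ∀ n : ℕ, (f '' Set.Ici n).Nonempty := fun n => ⟨f n, ⟨n, Set.mem_Ici.mpr le_rfl, rfl⟩⟩
  have hKmono : ∀ m n : ℕ, m ≤ n → f '' Set.Ici n ⊆ f '' Set.Ici m := by
    intro m n hmn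
    exact Set.image_mono (Set.Ici_subset_Ici.mpr hmn)
  have hKint : ∀ x : X, ¬ ∀ n : ℕ, x ∈ f '' Set.Ici n := by
    intro x hx
    obtain ⟨m, _, rfl⟩ := hx 0
    obtain ⟨m', hm', he⟩ := hx (m + 1)
    rw [Set.mem_Ici] at hm'
    have : m' = m := f.injective he
    omega
  refine ⟨hKS, ?_, ?_, ?_⟩
  · -- Scott topology = upper Vietoris topology
    rw [TopologicalSpace.ext_iff]
    intro S
    constructor
    · -- Scott open → upper Vietoris open
      rintro ⟨hup, hS⟩
      have key : ∀ K ∈ S, ∃ V : Set X, IsOpen V ∧ K.1 ⊆ V ∧ {L : KS X | L.1 ⊆ V} ⊆ S := by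
        intro K hK
        set d : Set (KS X) := {L : KS X | IsOpen L.1 ∧ K.1 ⊆ L.1} with hd
        have hUnivd : (⟨Set.univ, Set.univ_nonempty, cof_compact hcof _, cof_sat hcof _⟩ : KS X) ∈ d := by
          exact ⟨isOpen_univ, Set.subset_univ _⟩
        have hdne : d.Nonempty := ⟨_, hUnivd⟩
        have hdir : DirectedOn (· ≤ ·) d := by
          rintro L₁ ⟨hL₁o, hL₁s⟩ L₂ ⟨hL₂o, hL₂s⟩
          refine ⟨⟨L₁.1 ∩ L₂.1, ?_, cof_compact hcof _, cof_sat hcof _⟩,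
            ⟨hL₁o.inter hL₂o, Set.subset_inter hL₁s hL₂s⟩,
            Set.inter_subset_left, Set.inter_subset_right⟩
          rcases K.2.1 with ⟨x, hx⟩
          exact ⟨x, hL₁s hx, hL₂s hx⟩
        have hlub : IsLUB d K := by
          constructor
          · rintro L ⟨_, hKL⟩
            exact hKL
          · intro b hb
            rw [KS.le_iff]
            intro x hxb
            by_contra hxK
            have hmem : (⟨{x}ᶜ, cof_open_nonempty (by rw [compl_compl]; exact Set.finite_singleton x),
                cof_compact hcof _, cof_sat hcof _⟩ : KS X) ∈ d := by
              refine ⟨cof_compl_singleton_open hcof x, fun a ha => ?_⟩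
              simp only [Set.mem_compl_iff, Set.mem_singleton_iff]
              rintro rfl
              exact hxK ha
            have := hb hmem hxb
            simp at this
        obtain ⟨L, hLd, hLS⟩ := hS d hdne hdir K hlub hK
        exact ⟨L.1, hLd.1, hLd.2, fun M hM => hup (show L ≤ M from hM) hLS⟩
      choose V hVo hKV hVS using key
      have hSeq : S = ⋃₀ {T : Set (KS X) | ∃ U : Set X, IsOpen U ∧ T = {K : KS X | K.1 ⊆ U} ∧ T ⊆ S} := by
        apply subset_antisymm
        · intro K hK
          exact ⟨{L : KS X | L.1 ⊆ V K hK}, ⟨V K hK, hVo K hK, rfl, hVS K hK⟩, hKV K hK⟩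
        · rintro K ⟨T, ⟨U, _, rfl, hTS⟩, hKT⟩
          exact hTS hKT
      rw [hSeq]
      exact TopologicalSpace.GenerateOpen.sUnion _
        (by rintro T ⟨U, hUo, rfl, -⟩; exact TopologicalSpace.GenerateOpen.basic _ ⟨U, hUo, rfl⟩)
    · -- upper Vietoris open → Scott open
      intro h
      induction h with
      | basic T hT =>
        obtain ⟨U, hUo, rfl⟩ := hT
        constructor
        · intro K L hKL hK
          exact (show L.1 ⊆ K.1 from hKL).trans hK
        · intro d hdne hdir a ha haU
          have havoid : ∀ x ∈ Uᶜ, ∃ L ∈ d, x ∉ L.1 := by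
            intro x hxU
            by_contra hc
            push_neg at hc
            have hub : (⟨{x}, Set.singleton_nonempty x, cof_compact hcof _, cof_sat hcof _⟩ : KS X)
                ∈ upperBounds d := by
              intro L hL
              refine KS.le_iff.mpr ?_
              exact Set.singleton_subset_iff.mpr (hc L hL)
            have := ha.2 hub
            replace this := KS.le_iff.mp this
            exact hxU (haU (this rfl))
          have hUc : (Uᶜ : Set X).Finite := by
            rcases (hcof U).mp hUo with rfl | hfin
            · exact absurd (haU : a.1 ⊆ ∅) (by
                rcases a.2.1 with ⟨y, hy⟩
                intro hsub
                exact (hsub hy))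
            · exact hfin
          obtain ⟨z, hzd, hz⟩ := directed_avoid hdne hdir hUc havoid
          refine ⟨z, hzd, fun x hxz => ?_⟩
          by_contra hxU
          exact hz x hxU hxz
      | univ => exact ⟨isUpperSet_univ, fun d hd _ _ _ _ => by simpa using hd⟩
      | inter U V _ _ ihU ihV =>
        exact (scottTop (KS X)).isOpen_inter U V ihU ihV
      | sUnion S _ ihS =>
        exact (scottTop (KS X)).isOpen_sUnion S fun s hs => ihS s hs
  · -- not a dcpo
    intro hdcpo
    set d : Set (KS X) := Set.range (fun n : ℕ =>
      (⟨f '' Set.Ici n, hKn n, cof_compact hcof _, cof_sat hcof _⟩ : KS X)) with hd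
    have hdne : d.Nonempty := ⟨_, 0, rfl⟩
    have hdir : DirectedOn (· ≤ ·) d := by
      rintro _ ⟨m, rfl⟩ _ ⟨n, rfl⟩
      exact ⟨_, ⟨max m n, rfl⟩, hKmono m (max m n) (le_max_left _ _),
        hKmono n (max m n) (le_max_right _ _)⟩
    obtain ⟨a, ha⟩ := hdcpo d hdne hdir
    rcases a.2.1 with ⟨y, hy⟩
    refine hKint y fun n => ?_
    have : a.1 ⊆ f '' Set.Ici n := ha.1 ⟨n, rfl⟩
    exact this hy
  · -- not well-filtered
    intro hwf
    obtain ⟨K, hKmem, hKsub⟩ := hwf (Set.range fun n : ℕ => f '' Set.Ici n)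
      ⟨_, 0, rfl⟩
      (by rintro _ ⟨n, rfl⟩; exact ⟨hKn n, cof_compact hcof _, cof_sat hcof _⟩)
      (by rintro _ ⟨m, rfl⟩ _ ⟨n, rfl⟩
          exact ⟨_, ⟨max m n, rfl⟩, hKmono m (max m n) (le_max_left _ _),
            hKmono n (max m n) (le_max_right _ _)⟩)
      ∅ ((hcof ∅).mpr (Or.inl rfl))
      (by intro x hx
          exact absurd (fun n => hx _ ⟨n, rfl⟩) (hKint x))
    obtain ⟨n, rfl⟩ := hKmem
    exact (hKn n).ne_empty (Set.subset_empty_iff.mp hKsub)
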